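/- The Normalized Median Rule is monotone: if a single voter increases their vote for project p while all other ballot entries (of all voters, on all projects) are unchanged, then the normalized-median allocation to project p does not decrease. -/

import Mathlib

noncomputable def meanRule {ι : Type*} [Fintype ι] {m : ℕ} (X : ι → Fin m → ℝ) : Fin m → ℝ :=
  fun p => (∑ i, X i p) / (∑ i, ∑ q, X i q)

def l1 {m : ℕ} (a b : Fin m → ℝ) : ℝ := ∑ p, |a p - b p|

noncomputable def med (n : ℕ) (x : Fin n → ℝ) : ℝ :=
  ((List.ofFn x).mergeSort (fun a b => decide (a ≤ b))).getD ((n - 1) / 2) 0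

private lemma sorted_getElem_le {l : List ℝ} (hs : l.Pairwise (· ≤ ·)) {k : ℕ}
    (hk : k < l.length) {v : ℝ}
    (hc : k + 1 ≤ l.countP (fun a => decide (a ≤ v))) : l[k] ≤ v := by
  by_contra hlt
  push_neg at hlt
  have hsplit := List.countP_append (p := fun a => decide (a ≤ v)) (l₁ := l.take k) (l₂ := l.drop k)
  rw [List.take_append_drop] at hsplit
  have h1 : (l.take k).countP (fun a => decide (a ≤ v)) ≤ k := by
    calc (l.take k).countP (fun a => decide (a ≤ v)) ≤ (l.take k).length :=
          List.countP_le_length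
      _ ≤ k := by simp
  have h2 : (l.drop k).countP (fun a => decide (a ≤ v)) = 0 := by
    rw [List.countP_eq_zero]
    intro a ha
    rw [List.mem_iff_getElem] at ha
    obtain ⟨i, hi, rfl⟩ := ha
    have hik' : k + i < l.length := by
      have := (List.length_drop : (l.drop k).length = l.length - k); omega
    have heq : (l.drop k)[i] = l[k + i]'hik' := List.getElem_drop
    rw [heq]
    simp only [decide_eq_true_eq, not_le]
    have hki : k ≤ k + i := Nat.le_add_right _ _
    have : l[k] ≤ l[k + i]'hik' := by
      rcases eq_or_lt_of_le hki with h | h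
      · simp [← h]
      · exact (List.pairwise_iff_getElem.mp hs) k (k+i) hk hik' h
    linarith
  omega

private lemma med_mono {n : ℕ} (x y : Fin n → ℝ) (h : ∀ i, x i ≤ y i) :
    med n x ≤ med n y := by
  rcases Nat.eq_zero_or_pos n with rfl | hn
  · simp [med]
  set k := (n - 1) / 2 with hkdef
  have hkn : k < n := by omega
  set lx := (List.ofFn x).mergeSort (fun a b => decide (a ≤ b)) with hlx
  set ly := (List.ofFn y).mergeSort (fun a b => decide (a ≤ b)) with hly
  have hlxl : lx.length = n := by simp [hlx]
  have hlyl : ly.length = n := by simp [hly]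
  have hsx : lx.Pairwise (· ≤ ·) := List.pairwise_mergeSort' _ _
  have hsy : ly.Pairwise (· ≤ ·) := List.pairwise_mergeSort' _ _
  have hkx : k < lx.length := by omega
  have hky : k < ly.length := by omega
  rw [med, med, List.getD_eq_getElem _ _ hkx, List.getD_eq_getElem _ _ hky]
  set v := ly[k] with hv
  -- count of elements ≤ v in ly is ≥ k+1
  have hcy : k + 1 ≤ ly.countP (fun a => decide (a ≤ v)) := by
    have hsplit := List.countP_append (p := fun a => decide (a ≤ v)) (l₁ := ly.take (k+1)) (l₂ := ly.drop (k+1))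
    rw [List.take_append_drop] at hsplit
    have htake : (ly.take (k+1)).countP (fun a => decide (a ≤ v)) = (ly.take (k+1)).length := by
      rw [List.countP_eq_length]
      intro a ha
      rw [List.mem_iff_getElem] at ha
      obtain ⟨i, hi, rfl⟩ := ha
      rw [List.getElem_take]
      simp only [decide_eq_true_eq]
      have hik : i ≤ k := by
        have := (List.length_take : (ly.take (k+1)).length = min (k+1) ly.length); omega
      rw [hv]
      rcases eq_or_lt_of_le hik with h' | h'
      · simp [h']
      · exact (List.pairwise_iff_getElem.mp hsy) i k (by omega) hky h' 
    have hlen : (ly.take (k+1)).length = k + 1 := by simp; omega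
    omega
  -- transfer to lx
  have hcx : k + 1 ≤ lx.countP (fun a => decide (a ≤ v)) := by
    have hx : lx.countP (fun a => decide (a ≤ v)) = (List.ofFn x).countP (fun a => decide (a ≤ v)) :=
      (List.mergeSort_perm _ _).countP_eq _
    have hy : ly.countP (fun a => decide (a ≤ v)) = (List.ofFn y).countP (fun a => decide (a ≤ v)) :=
      (List.mergeSort_perm _ _).countP_eq _
    rw [hx]
    rw [hy] at hcy
    rw [List.ofFn_eq_map, List.countP_map] at hcy ⊢
    refine le_trans hcy (List.countP_mono_left ?_)
    intro i _ hi
    simp only [Function.comp, decide_eq_true_eq] at hi ⊢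
    exact le_trans (h i) hi
  exact sorted_getElem_le hsx hkx hcx

private lemma med_nonneg {n : ℕ} (x : Fin n → ℝ) (h : ∀ i, 0 ≤ x i) : 0 ≤ med n x := by
  rw [med]
  set l := (List.ofFn x).mergeSort (fun a b => decide (a ≤ b)) with hl
  rcases lt_or_ge ((n - 1) / 2) l.length with hlt | hge
  · rw [List.getD_eq_getElem _ _ hlt]
    have hm : l[(n - 1) / 2] ∈ l := List.getElem_mem _
    have hm' : l[(n - 1) / 2] ∈ List.ofFn x := (List.mergeSort_perm _ _).mem_iff.mp hm
    rw [List.mem_ofFn] at hm'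
    obtain ⟨i, hi⟩ := hm'
    rw [← hi]; exact h i
  · rw [List.getD_eq_default _ _ hge]


/-- The Normalized Median Rule is monotone: if a single voter increases their vote
for project p (all other entries unchanged), the normalized-median allocation to p
does not decrease. -/
theorem normalized_median_monotone {n m : ℕ} (hn : 0 < n)
    (X X' : Fin n → Fin m → ℝ) (j : Fin n) (p : Fin m)
    (hnn : ∀ i q, 0 ≤ X i q) (hnn' : ∀ i q, 0 ≤ X' i q)
    (hinc : X j p ≤ X' j p)
    (hfix : ∀ i q, (i, q) ≠ (j, p) → X' i q = X i q)
    (hpos : 0 < ∑ q, med n (fun i => X i q))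
    (hpos' : 0 < ∑ q, med n (fun i => X' i q)) :
    med n (fun i => X i p) / (∑ q, med n (fun i => X i q)) ≤
      med n (fun i => X' i p) / (∑ q, med n (fun i => X' i q)) := by
  set a := med n (fun i => X i p) with ha
  set a' := med n (fun i => X' i p) with ha'
  set S := ∑ q, med n (fun i => X i q) with hS
  set S' := ∑ q, med n (fun i => X' i q) with hS'
  have haa' : a ≤ a' := by
    apply med_mono
    intro i
    by_cases hij : i = j
    · subst hij; exact hinc
    · rw [hfix i p (by simp [hij, Prod.ext_iff])]
  have hmedeq : ∀ q, q ≠ p → med n (fun i => X' i q) = med n (fun i => X i q) := by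
    intro q hq
    congr 1
    funext i
    exact hfix i q (by simp [Prod.ext_iff, hq])
  have hSdiff : S' - S = a' - a := by
    rw [hS', hS, ← Finset.sum_sub_distrib,
      Finset.sum_eq_single p (fun q _ hq => by rw [hmedeq q hq]; ring)
        (fun h => absurd (Finset.mem_univ p) h)]
  have haS : a ≤ S := by
    rw [hS]
    exact Finset.single_le_sum (fun q _ => med_nonneg _ (fun i => hnn i q)) (Finset.mem_univ p)
  have ha0 : 0 ≤ a := med_nonneg _ (fun i => hnn i p)
  rw [div_le_div_iff₀ hpos hpos']
  nlinarith [mul_nonneg (sub_nonneg.mpr haa') (sub_nonneg.mpr haS)]
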